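/- Let H and E be complex Hilbert spaces, let J : E → E be a bounded self-adjoint involution (J = J* and J∘J = I), let K : E → H be a bounded operator, and let M : H → H and F : H → H be bounded operators with (M − M*)/(2i) = KJK*. Let z ∈ ℂ be such that both M − zF and Re M − zF are invertible, where Re M = (M + M*)/2. Set W(z) = I − 2i·K*(M − zF)⁻¹KJ and V(z) = K*(Re M − zF)⁻¹K. Then the operators I + W(z) and I + i·V(z)J are both invertible on E, and V(z) = i·(W(z) − I)(W(z) + I)⁻¹J = i·(W(z) + I)⁻¹(W(z) − I)J, and W(z) = (I − i·V(z)J)(I + i·V(z)J)⁻¹ = (I + i·V(z)J)⁻¹(I − i·V(z)J). -/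

import Mathlib

open ContinuousLinearMap

/-- For an `F`-system with `Im M = KJK*`, transfer function
`W(z) = I - 2iK*(M - zF)⁻¹KJ` and impedance function
`V(z) = K*(Re M - zF)⁻¹K`, the operators `I + W(z)` and `I + iV(z)J` are
invertible, `V(z) = i(W(z) - I)(W(z) + I)⁻¹J = i(W(z) + I)⁻¹(W(z) - I)J` and
`W(z) = (I - iV(z)J)(I + iV(z)J)⁻¹ = (I + iV(z)J)⁻¹(I - iV(z)J)`. -/
theorem stmt_5
    {H E : Type*}
    [NormedAddCommGroup H] [InnerProductSpace ℂ H] [CompleteSpace H]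
    [NormedAddCommGroup E] [InnerProductSpace ℂ E] [CompleteSpace E]
    (J : E →L[ℂ] E) (hJsa : adjoint J = J) (hJinv : J ∘L J = 1)
    (K : E →L[ℂ] H) (M F : H →L[ℂ] H)
    (hIm : (2 * Complex.I)⁻¹ • (M - adjoint M) = K ∘L J ∘L adjoint K)
    (z : ℂ)
    (Rinv : H →L[ℂ] H)
    (hRinv₁ : (M - z • F) ∘L Rinv = 1) (hRinv₂ : Rinv ∘L (M - z • F) = 1)
    (Sinv : H →L[ℂ] H)
    (hSinv₁ : ((2 : ℂ)⁻¹ • (M + adjoint M) - z • F) ∘L Sinv = 1)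
    (hSinv₂ : Sinv ∘L ((2 : ℂ)⁻¹ • (M + adjoint M) - z • F) = 1)
    (W V : E →L[ℂ] E)
    (hW : W = 1 - (2 * Complex.I) • (adjoint K ∘L Rinv ∘L (K ∘L J)))
    (hV : V = adjoint K ∘L Sinv ∘L K) :
    IsUnit (1 + W) ∧ IsUnit (1 + Complex.I • (V ∘L J)) ∧
    V = Complex.I • ((W - 1) * Ring.inverse (1 + W) * J) ∧
    V = Complex.I • (Ring.inverse (1 + W) * (W - 1) * J) ∧
    W = (1 - Complex.I • (V ∘L J)) * Ring.inverse (1 + Complex.I • (V ∘L J)) ∧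
    W = Ring.inverse (1 + Complex.I • (V ∘L J)) * (1 - Complex.I • (V ∘L J)) := by
  set A : H →L[ℂ] H := M - z • F with hA
  set S : H →L[ℂ] H := (2 : ℂ)⁻¹ • (M + adjoint M) - z • F with hS
  have hA1 : ∀ x, A (Rinv x) = x := fun x => by
    simpa using DFunLike.congr_fun hRinv₁ x
  have hR2 : ∀ x, Rinv (A x) = x := fun x => by
    simpa using DFunLike.congr_fun hRinv₂ x
  have hS1 : ∀ x, S (Sinv x) = x := fun x => by
    simpa using DFunLike.congr_fun hSinv₁ x
  have hS2 : ∀ x, Sinv (S x) = x := fun x => by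
    simpa using DFunLike.congr_fun hSinv₂ x
  have hJJ : ∀ x, J (J x) = x := fun x => by
    simpa using DFunLike.congr_fun hJinv x
  have key : ∀ y, K (J (adjoint K y)) = Complex.I • (S y - A y) := by
    intro y
    have h1 := DFunLike.congr_fun hIm y
    simp only [comp_apply, smul_apply, sub_apply] at h1
    rw [← h1, hS, hA]
    simp only [sub_apply, smul_apply, add_apply]
    have hI : (2 * Complex.I)⁻¹ = -((2:ℂ)⁻¹ * Complex.I) := by
      rw [mul_inv, Complex.inv_I]; ring
    rw [hI]
    module
  set X : E →L[ℂ] E := adjoint K ∘L (Rinv ∘L (K ∘L J)) with hX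
  set Y : E →L[ℂ] E := adjoint K ∘L (Sinv ∘L (K ∘L J)) with hY
  have hXY : X * Y = Complex.I • (X - Y) := by
    ext x
    simp only [hX, hY, mul_def, comp_apply, smul_apply, sub_apply, key,
      map_smul, map_sub, hS1, hR2]
  have hYX : Y * X = Complex.I • (X - Y) := by
    ext x
    simp only [hX, hY, mul_def, comp_apply, smul_apply, sub_apply, key,
      map_smul, map_sub, hS2, hA1]
  set u : E →L[ℂ] E := Complex.I • X with hu
  set t : E →L[ℂ] E := Complex.I • Y with ht
  have hut : u * t = t - u := by
    rw [hu, ht, smul_mul_smul_comm, hXY, smul_smul]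
    match_scalars <;> simp [Complex.I_mul_I] <;> ring
  have htu : t * u = t - u := by
    rw [hu, ht, smul_mul_smul_comm, hYX, smul_smul]
    match_scalars <;> simp [Complex.I_mul_I] <;> ring
  have hW2 : W = 1 - (u + u) := by rw [hW, hu]; module
  have hVJ : V ∘L J = Y := by
    rw [hV, hY]; ext x; simp [comp_apply]
  have hYJ : Y * J = V := by
    show Y ∘L J = V
    rw [hV, hY]; ext x; simp [comp_apply, hJJ]
  have ht' : Complex.I • (V ∘L J) = t := by rw [hVJ, ht]
  have hinv1 : (1 - u) * (1 + t) = 1 := by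
    have h : (1 - u) * (1 + t) = 1 + t - u - u * t := by noncomm_ring
    rw [h, hut]; abel
  have hinv2 : (1 + t) * (1 - u) = 1 := by
    have h : (1 + t) * (1 - u) = 1 + t - u - t * u := by noncomm_ring
    rw [h, htu]; abel
  have h1pW : 1 + W = (1 - u) + (1 - u) := by rw [hW2]; abel
  have hP1 : (1 + W) * ((2:ℂ)⁻¹ • (1 + t)) = 1 := by
    rw [h1pW, mul_smul_comm, add_mul, hinv1]
    module
  have hP2 : ((2:ℂ)⁻¹ • (1 + t)) * (1 + W) = 1 := by
    rw [h1pW, smul_mul_assoc, mul_add, hinv2]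
    module
  set Pu : (E →L[ℂ] E)ˣ := ⟨1 + W, (2:ℂ)⁻¹ • (1 + t), hP1, hP2⟩ with hPu
  set Qu : (E →L[ℂ] E)ˣ := ⟨1 + t, 1 - u, hinv2, hinv1⟩ with hQu
  have hRinvP : Ring.inverse (1 + W) = (2:ℂ)⁻¹ • (1 + t) := Ring.inverse_unit Pu
  have hRinvQ : Ring.inverse (1 + t) = 1 - u := Ring.inverse_unit Qu
  have hWm1 : W - 1 = -(u + u) := by rw [hW2]; abel
  have hu1t : u * (1 + t) = t := by rw [mul_add, mul_one, hut]; abel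
  have ht1u : (1 + t) * u = t := by rw [add_mul, one_mul, htu]; abel
  have htJ : t * J = Complex.I • V := by
    rw [ht, smul_mul_assoc, hYJ]
  refine ⟨⟨Pu, rfl⟩, ?_, ?_, ?_, ?_, ?_⟩
  · rw [ht']; exact ⟨Qu, rfl⟩
  · rw [hRinvP, hWm1, mul_smul_comm, neg_mul, add_mul, hu1t, smul_mul_assoc,
      neg_mul, add_mul, htJ]
    match_scalars <;> ring_nf <;> simp [Complex.I_sq]
  · rw [hRinvP, hWm1, smul_mul_assoc, mul_neg, mul_add, ht1u, smul_mul_assoc,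
      neg_mul, add_mul, htJ]
    match_scalars <;> ring_nf <;> simp [Complex.I_sq]
  · rw [ht', hRinvQ]
    have h : (1 - t) * (1 - u) = 1 - u - t + t * u := by noncomm_ring
    rw [h, htu, hW2]; abel
  · rw [ht', hRinvQ]
    have h : (1 - u) * (1 - t) = 1 - t - u + u * t := by noncomm_ring
    rw [h, hut, hW2]; abel
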